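/- Let M be an expanding integer n×n matrix with |det M| = 2, and let d* ∈ ℤ^n \ M^Tℤ^n. Suppose the trigonometric polynomial c(ξ) = Σ_{k∈Q} c_k e^{2πi(k,ξ)} (with finite Q ⊂ ℤ^n and c(0) = 1) has a zero of order at least ℓ+1 at the point v = M^{−T} d*. Then c has at least ℓ+2 nonzero coefficients, i.e., |{k : c_k ≠ 0}| ≥ ℓ+2. -/

import Mathlib

open Complex

/-- The real vector associated with an integer vector. -/
def intVec {n : ℕ} (k : Fin n → ℤ) : Fin n → ℝ := fun i => (k i : ℝ)

/-- An integer matrix is expanding if all its (complex) eigenvalues have modulus `> 1`. -/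
def IsExpanding {n : ℕ} (M : Matrix (Fin n) (Fin n) ℤ) : Prop :=
  ∀ μ : ℂ, (Matrix.charpoly (M.map (Int.cast : ℤ → ℂ))).IsRoot μ → 1 < ‖μ‖

/-- The trigonometric polynomial `c(ξ) = Σ_{k∈Q} c_k e^{2πi(k,ξ)}`. -/
noncomputable def maskP {n : ℕ} (Q : Finset (Fin n → ℤ)) (cc : (Fin n → ℤ) → ℂ)
    (ξ : Fin n → ℝ) : ℂ :=
  ∑ k ∈ Q, cc k * Complex.exp (2 * (Real.pi : ℂ) * Complex.I * (∑ i, ((k i : ℝ) : ℂ) * (ξ i : ℂ)))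

theorem maskP_contDiff {n : ℕ} (Q : Finset (Fin n → ℤ)) (cc : (Fin n → ℤ) → ℂ) :
    ContDiff ℝ ⊤ (maskP Q cc) := by
  unfold maskP
  apply ContDiff.sum (fun k _ => ?_)
  apply ContDiff.mul contDiff_const
  apply ((Complex.contDiff_exp.restrict_scalars ℝ (𝕜' := ℂ))).comp
  apply ContDiff.mul contDiff_const
  apply ContDiff.sum (fun i _ => ?_)
  exact ContDiff.mul contDiff_const (Complex.ofRealCLM.contDiff.comp (contDiff_apply ℝ ℝ i))

theorem iteratedFDeriv_shift {E : Type u} [NormedAddCommGroup E] [NormedSpace ℝ E] (r : ℕ) :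
    ∀ {F : Type u} [NormedAddCommGroup F] [NormedSpace ℝ F] (f : E → F), ContDiff ℝ ⊤ f →
    ∀ (v x : E), iteratedFDeriv ℝ r (fun y => f (v + y)) x = iteratedFDeriv ℝ r f (v + x) := by
  induction r with
  | zero => intro F _ _ f hf v x; ext m; simp
  | succ r ih =>
    intro F _ _ f hf v x
    ext m
    rw [iteratedFDeriv_succ_apply_right, iteratedFDeriv_succ_apply_right]
    have hd : (fun y => fderiv ℝ (fun z => f (v + z)) y) = fun y => fderiv ℝ f (v + y) := by
      funext y
      have h1 : HasFDerivAt (fun z => f (v + z)) (fderiv ℝ f (v + y)) y := by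
        have := ((hf.differentiable (by simp) (v + y)).hasFDerivAt.comp y
          ((hasFDerivAt_id y).const_add v))
        exact this
      exact h1.fderiv
    rw [hd, ih (fun y => fderiv ℝ f y) (hf.fderiv_right le_top) v x]

theorem hasDerivAt_cexp_mul (z : ℂ) (s : ℝ) :
    HasDerivAt (fun t : ℝ => Complex.exp (z * t)) (Complex.exp (z * s) * z) s := by
  have h1 : HasDerivAt (fun t : ℝ => (t : ℂ)) 1 s := (hasDerivAt_id s).ofReal_comp
  have h2 : HasDerivAt (fun t : ℝ => z * (t : ℂ)) z s := by
    simpa using h1.const_mul z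
  simpa using h2.cexp

theorem sumExp_iteratedDeriv {ι : Type*} (Q : Finset ι) (w z : ι → ℂ) (r : ℕ) :
    iteratedDeriv r (fun t : ℝ => ∑ k ∈ Q, w k * Complex.exp (z k * t)) =
      fun s : ℝ => ∑ k ∈ Q, w k * z k ^ r * Complex.exp (z k * s) := by
  induction r with
  | zero => funext s; simp
  | succ r ih =>
    rw [iteratedDeriv_succ, ih]
    funext s
    rw [deriv_fun_sum (fun k _ => by
      exact (((hasDerivAt_cexp_mul (z k) s).const_mul (w k * z k ^ r))).differentiableAt)]
    refine Finset.sum_congr rfl fun k _ => ?_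
    rw [((hasDerivAt_cexp_mul (z k) s).const_mul (w k * z k ^ r)).deriv]
    ring

theorem key_sum_eq_zero {n : ℕ} (Q : Finset (Fin n → ℤ)) (cc : (Fin n → ℤ) → ℂ)
    (v u : Fin n → ℝ) (ℓ : ℕ)
    (hzero : ∀ r : ℕ, r ≤ ℓ → iteratedFDeriv ℝ r (maskP Q cc) v = 0)
    (r : ℕ) (hr : r ≤ ℓ) :
    ∑ k ∈ Q, (cc k * Complex.exp (2 * (Real.pi : ℂ) * Complex.I * (∑ i, ((k i : ℝ) : ℂ) * (v i : ℂ))))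
      * (2 * (Real.pi : ℂ) * Complex.I * (∑ i, ((k i : ℝ) : ℂ) * (u i : ℂ))) ^ r = 0 := by
  classical
  set a : (Fin n → ℤ) → ℂ :=
    fun k => 2 * (Real.pi : ℂ) * Complex.I * (∑ i, ((k i : ℝ) : ℂ) * (v i : ℂ)) with ha
  set b : (Fin n → ℤ) → ℂ :=
    fun k => 2 * (Real.pi : ℂ) * Complex.I * (∑ i, ((k i : ℝ) : ℂ) * (u i : ℂ)) with hb
  set L : ℝ →L[ℝ] (Fin n → ℝ) := (1 : ℝ →L[ℝ] ℝ).smulRight u with hL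
  set g : ℝ → ℂ := fun t => ∑ k ∈ Q, (cc k * Complex.exp (a k)) * Complex.exp (b k * t) with hg
  have hshift : ContDiff ℝ ⊤ (fun y => maskP Q cc (v + y)) :=
    (maskP_contDiff Q cc).comp (contDiff_const.add contDiff_id)
  have hgeq : g = (fun y => maskP Q cc (v + y)) ∘ L := by
    funext t
    simp only [hg, Function.comp_apply, maskP]
    refine Finset.sum_congr rfl fun k _ => ?_
    rw [mul_assoc, ← Complex.exp_add]
    congr 1
    have hLt : (L t : Fin n → ℝ) = fun i => t * u i := by
      funext i
      simp [hL, smul_eq_mul]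
    rw [hLt]
    have hterm : ∀ i : Fin n, ((k i : ℝ) : ℂ) * ((v i + t * u i : ℝ) : ℂ)
        = ((k i : ℝ) : ℂ) * ((v i : ℝ) : ℂ) + (t : ℂ) * (((k i : ℝ) : ℂ) * ((u i : ℝ) : ℂ)) := by
      intro i; push_cast; ring
    simp only [Pi.add_apply]
    rw [Finset.sum_congr rfl (fun i _ => hterm i), Finset.sum_add_distrib, ← Finset.mul_sum]
    rw [ha, hb]
    ring_nf
  have hder0 : iteratedDeriv r g 0 = 0 := by
    rw [iteratedDeriv_eq_iteratedFDeriv, hgeq,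
      L.iteratedFDeriv_comp_right hshift 0 le_top]
    rw [map_zero, iteratedFDeriv_shift r (maskP Q cc) (maskP_contDiff Q cc) v 0, add_zero,
      hzero r hr]
    simp
  rw [hg, sumExp_iteratedDeriv] at hder0
  have h2 : ∑ k ∈ Q, cc k * Complex.exp (a k) * b k ^ r = 0 := by
    simpa using hder0
  simp only [ha, hb] at h2
  rw [← h2]

theorem coeff_aux {n : ℕ} (d : Fin n → ℤ) (j : Fin n) :
    (∑ i, Polynomial.C ((d i : ℝ)) * Polynomial.X ^ ((i : ℕ) + 1)).coeff ((j : ℕ) + 1)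
      = (d j : ℝ) := by
  rw [Polynomial.finset_sum_coeff]
  simp [Polynomial.coeff_C_mul, Polynomial.coeff_X_pow, Fin.val_inj]

theorem exists_good_dir {n : ℕ} (S : Finset (Fin n → ℤ)) :
    ∃ u : Fin n → ℝ, ∀ k ∈ S, ∀ k' ∈ S,
      (∑ i, (k i : ℝ) * u i) = (∑ i, (k' i : ℝ) * u i) → k = k' := by
  classical
  set p : (Fin n → ℤ) → Polynomial ℝ :=
    fun d => ∑ i, Polynomial.C ((d i : ℝ)) * Polynomial.X ^ ((i : ℕ) + 1) with hp
  have hpne : ∀ d : Fin n → ℤ, d ≠ 0 → p d ≠ 0 := by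
    intro d hd hcon
    obtain ⟨j, hj⟩ := Function.ne_iff.mp hd
    have h2 := coeff_aux d j
    have h3 : p d = ∑ i, Polynomial.C ((d i : ℝ)) * Polynomial.X ^ ((i : ℕ) + 1) := rfl
    rw [← h3, hcon] at h2
    simp only [Polynomial.coeff_zero] at h2
    have : d j = 0 := by exact_mod_cast h2.symm
    exact hj (by simpa using this)
  set P : Polynomial ℝ :=
    ∏ q ∈ (S ×ˢ S).filter (fun q => q.1 ≠ q.2), p (q.1 - q.2) with hP
  have hPne : P ≠ 0 := by
    rw [hP, Finset.prod_ne_zero_iff]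
    intro q hq
    exact hpne _ (sub_ne_zero.mpr (Finset.mem_filter.mp hq).2)
  obtain ⟨t, ht⟩ := P.exists_eval_ne_zero_of_natDegree_lt_card hPne
    ((Cardinal.nat_lt_aleph0 _).trans_le (Cardinal.aleph0_le_mk ℝ))
  refine ⟨fun i => t ^ ((i : ℕ) + 1), fun k hk k' hk' hsum => ?_⟩
  by_contra hne
  have hmem : (k, k') ∈ (S ×ˢ S).filter (fun q => q.1 ≠ q.2) := by
    simp [Finset.mem_filter, Finset.mem_product, hk, hk', hne]
  have heval : (p (k - k')).eval t ≠ 0 := by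
    rw [hP, Polynomial.eval_prod] at ht
    exact Finset.prod_ne_zero_iff.mp ht (k, k') hmem
  apply heval
  rw [hp]
  simp only [Polynomial.eval_finset_sum, Polynomial.eval_mul, Polynomial.eval_C,
    Polynomial.eval_pow, Polynomial.eval_X, Pi.sub_apply]
  push_cast
  simp only [sub_mul]
  rw [Finset.sum_sub_distrib, hsum, sub_self]

theorem vdm_contra {m : ℕ} (hm : 0 < m) (α β : Fin m → ℂ) (hβ : Function.Injective β)
    (hα : ∀ j, α j ≠ 0) (h : ∀ r : ℕ, r < m → ∑ j, α j * β j ^ r = 0) : False := by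
  have hdet : ((Matrix.vandermonde β).transpose).det ≠ 0 := by
    rw [Matrix.det_transpose]
    exact Matrix.det_vandermonde_ne_zero_iff.mpr hβ
  have hmv : ((Matrix.vandermonde β).transpose).mulVec α = 0 := by
    funext r
    have := h (r : ℕ) r.isLt
    simp only [Matrix.mulVec, Matrix.transpose_apply, Matrix.vandermonde_apply, dotProduct,
      Pi.zero_apply]
    rw [← this]
    exact Finset.sum_congr rfl fun j _ => mul_comm _ _
  have := Matrix.eq_zero_of_mulVec_eq_zero hdet hmv
  exact hα ⟨0, hm⟩ (congrFun this ⟨0, hm⟩)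

/-- a mask for a two-digit dilation matrix (`|det M| = 2`) with `c(0)=1`
having a zero of order `≥ ℓ+1` at `v = M^{-T}d*` has at least `ℓ+2` nonzero
coefficients. -/
theorem stmt14 {n : ℕ} (M : Matrix (Fin n) (Fin n) ℤ) (hM : IsExpanding M)
    (hdet : |M.det| = 2)
    (dstar : Fin n → ℤ) (hdstar : ¬ ∃ l : Fin n → ℤ, dstar = (Matrix.transpose M).mulVec l)
    (Q : Finset (Fin n → ℤ)) (cc : (Fin n → ℤ) → ℂ) (hccQ : ∀ k ∉ Q, cc k = 0)
    (hnorm : ∑ k ∈ Q, cc k = 1) (ℓ : ℕ)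
    (hzero : ∀ r : ℕ, r ≤ ℓ →
      iteratedFDeriv ℝ r (maskP Q cc)
        (((M.map (Int.cast : ℤ → ℝ)).transpose)⁻¹.mulVec (intVec dstar)) = 0) :
    ℓ + 2 ≤ {k : Fin n → ℤ | cc k ≠ 0}.ncard := by
  classical
  set v : Fin n → ℝ := ((M.map (Int.cast : ℤ → ℝ)).transpose)⁻¹.mulVec (intVec dstar) with hv
  set S : Finset (Fin n → ℤ) := Q.filter (fun k => cc k ≠ 0) with hS
  have hsetS : {k : Fin n → ℤ | cc k ≠ 0} = ↑S := by
    ext k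
    simp only [Set.mem_setOf_eq, hS, Finset.coe_filter, Set.mem_setOf_eq]
    constructor
    · intro h; refine ⟨?_, h⟩; by_contra hk; exact h (hccQ k hk)
    · exact fun h => h.2
  rw [hsetS, Set.ncard_coe_finset]
  by_contra hlt
  push_neg at hlt
  have hm1 : S.card ≤ ℓ + 1 := by omega
  -- S is nonempty
  have hSne : S.Nonempty := by
    by_contra hno
    rw [Finset.not_nonempty_iff_eq_empty] at hno
    have : ∑ k ∈ Q, cc k = 0 := by
      refine Finset.sum_eq_zero fun k hk => ?_
      by_contra hc
      have : k ∈ S := by simp [hS, Finset.mem_filter, hk, hc]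
      rw [hno] at this
      exact absurd this (Finset.notMem_empty k)
    rw [hnorm] at this
    exact one_ne_zero this
  have hmpos : 0 < S.card := Finset.card_pos.mpr hSne
  obtain ⟨u, hu⟩ := exists_good_dir S
  set a : (Fin n → ℤ) → ℂ :=
    fun k => 2 * (Real.pi : ℂ) * Complex.I * (∑ i, ((k i : ℝ) : ℂ) * (v i : ℂ)) with ha
  set b : (Fin n → ℤ) → ℂ :=
    fun k => 2 * (Real.pi : ℂ) * Complex.I * (∑ i, ((k i : ℝ) : ℂ) * (u i : ℂ)) with hb
  -- key identities restricted to S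
  have hES : ∀ r : ℕ, r ≤ ℓ → ∑ k ∈ S, (cc k * Complex.exp (a k)) * b k ^ r = 0 := by
    intro r hr
    have h1 := key_sum_eq_zero Q cc v u ℓ hzero r hr
    rw [← h1, hS]
    refine Finset.sum_filter_of_ne fun k hk hne => ?_
    intro hc
    apply hne
    rw [ha, hb, hc]
    ring
  -- set up the Vandermonde system
  set e : Fin S.card ≃ ↥S := S.equivFin.symm with he
  set α : Fin S.card → ℂ := fun j => cc ((e j) : Fin n → ℤ) * Complex.exp (a ((e j) : Fin n → ℤ))
    with hα
  set β : Fin S.card → ℂ := fun j => b ((e j) : Fin n → ℤ) with hβ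
  have h2pi : (2 * (Real.pi : ℂ) * Complex.I) ≠ 0 := by
    simp [Real.pi_ne_zero, Complex.I_ne_zero, Complex.ofReal_ne_zero]
  have hβinj : Function.Injective β := by
    intro j j' hjj
    rw [hβ] at hjj
    simp only [hb] at hjj
    have hsum : (∑ i, (((e j : Fin n → ℤ) i : ℝ)) * u i : ℝ)
        = (∑ i, (((e j' : Fin n → ℤ) i : ℝ)) * u i : ℝ) := by
      have := mul_left_cancel₀ h2pi hjj
      have hcast : ∀ (k : Fin n → ℤ), (∑ i, ((k i : ℝ) : ℂ) * ((u i : ℝ) : ℂ))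
          = (((∑ i, (k i : ℝ) * u i : ℝ)) : ℂ) := by
        intro k; push_cast; ring
      rw [hcast, hcast] at this
      exact_mod_cast this
    have := hu _ (e j).2 _ (e j').2 hsum
    exact e.injective (Subtype.ext this)
  have hαne : ∀ j, α j ≠ 0 := by
    intro j
    rw [hα]
    apply mul_ne_zero _ (Complex.exp_ne_zero _)
    have h4 : (e j : Fin n → ℤ) ∈ Q.filter (fun k => cc k ≠ 0) := (e j).2
    exact (Finset.mem_filter.mp h4).2
  have hsys : ∀ r : ℕ, r < S.card → ∑ j, α j * β j ^ r = 0 := by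
    intro r hr
    have hrℓ : r ≤ ℓ := by omega
    have h3 := hES r hrℓ
    rw [← h3, ← Finset.sum_coe_sort S (fun k => (cc k * Complex.exp (a k)) * b k ^ r)]
    exact Equiv.sum_comp e (fun x : ↥S => (cc (x : Fin n → ℤ) * Complex.exp (a (x : Fin n → ℤ)))
      * b (x : Fin n → ℤ) ^ r)
  exact vdm_contra hmpos α β hβinj hαne hsys
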